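/- Let $(p_j)$ be positive, non-increasing, summable frequencies, $k$ a positive integer, $\Delta\nu(x) = \#\{j: x/2 < p_j \le x\}$ and $D(x) = \int_0^x \Delta\nu(u)\,du$. Assume $\Delta\nu$ is bounded and $D(x)/x \to k$ as $x \downarrow 0$. Then $p_{j+k}/p_j \to 1/2$ as $j \to \infty$. -/

import Mathlib

open Real Set Filter MeasureTheory

private lemma dnu_tsum_rep (p : ℕ → ℝ)
    (hfin : ∀ x : ℝ, {j : ℕ | x / 2 < p j ∧ p j ≤ x}.Finite) (x : ℝ) :
    (({j : ℕ | x / 2 < p j ∧ p j ≤ x}).ncard : ENNReal)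
      = ∑' j : ℕ, (Set.Ico (p j) (2 * p j)).indicator (fun _ => (1 : ENNReal)) x := by
  have hset : {j : ℕ | x / 2 < p j ∧ p j ≤ x} = {j : ℕ | x ∈ Set.Ico (p j) (2 * p j)} := by
    ext j
    simp only [Set.mem_setOf_eq, Set.mem_Ico]
    constructor
    · rintro ⟨h1, h2⟩; exact ⟨h2, by linarith⟩
    · rintro ⟨h1, h2⟩; exact ⟨by linarith, h1⟩
  have hS := hfin x
  rw [hset] at hS ⊢
  classical
  rw [tsum_eq_sum (s := hS.toFinset) (by
    intro j hj
    rw [Set.Finite.mem_toFinset, Set.mem_setOf_eq] at hj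
    simp [Set.indicator_of_notMem hj])]
  have : ∀ j ∈ hS.toFinset,
      (Set.Ico (p j) (2 * p j)).indicator (fun _ => (1 : ENNReal)) x = 1 := by
    intro j hj
    rw [Set.Finite.mem_toFinset, Set.mem_setOf_eq] at hj
    simp [Set.indicator_of_mem hj]
  rw [Finset.sum_congr rfl this, Finset.sum_const, nsmul_eq_mul, mul_one]
  congr 1
  have := hS.fintype
  rw [Set.ncard_eq_toFinset_card' _]
  congr 1
  ext j
  simp

private lemma dnu_measurable (p : ℕ → ℝ)
    (hfin : ∀ x : ℝ, {j : ℕ | x / 2 < p j ∧ p j ≤ x}.Finite) :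
    Measurable (fun x : ℝ => (({j : ℕ | x / 2 < p j ∧ p j ≤ x}).ncard : ℝ)) := by
  have heq : (fun x : ℝ => (({j : ℕ | x / 2 < p j ∧ p j ≤ x}).ncard : ℝ))
      = fun x : ℝ => (∑' j : ℕ,
          (Set.Ico (p j) (2 * p j)).indicator (fun _ => (1 : ENNReal)) x).toReal := by
    funext x
    rw [← dnu_tsum_rep p hfin x]
    simp
  rw [heq]
  exact (Measurable.ennreal_tsum fun j =>
    (measurable_const.indicator measurableSet_Ico)).ennreal_toReal

theorem stmt18 (p : ℕ → ℝ) (hpos : ∀ j, 0 < p j) (hmono : ∀ j, p (j + 1) ≤ p j)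
    (hsum : Summable p) (k : ℕ) (hk : 0 < k)
    (Δν : ℝ → ℝ) (hΔν : ∀ x : ℝ, Δν x = (({j : ℕ | x / 2 < p j ∧ p j ≤ x}).ncard : ℝ))
    (hbdd : ∃ C : ℝ, ∀ x : ℝ, 0 < x → Δν x ≤ C)
    (D : ℝ → ℝ) (hD : ∀ x : ℝ, D x = ∫ u in Set.Ioc (0 : ℝ) x, Δν u)
    (hDk : Tendsto (fun x : ℝ => D x / x) (nhdsWithin (0 : ℝ) (Set.Ioi (0 : ℝ))) (nhds (k : ℝ))) :
    Tendsto (fun j : ℕ => p (j + k) / p j) atTop (nhds (1 / 2)) := by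
  classical
  have hanti : Antitone p := antitone_nat_of_succ_le hmono
  have hp0 : Tendsto p atTop (nhds 0) := hsum.tendsto_atTop_zero
  -- finiteness of the counting sets
  have hfin : ∀ x : ℝ, {j : ℕ | x / 2 < p j ∧ p j ≤ x}.Finite := by
    intro x
    rcases le_or_gt x 0 with hx | hx
    · apply Set.Finite.subset Set.finite_empty
      rintro j ⟨_, h2⟩
      exact absurd (hpos j) (by simp; linarith)
    · obtain ⟨N, hN⟩ := (Metric.tendsto_atTop.1 hp0 (x / 2) (by positivity))
      apply Set.Finite.subset (Set.finite_Iio N)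
      intro j hj
      by_contra h
      simp only [Set.mem_Iio] at h
      have := hN j (le_of_not_gt (by simpa using h))
      rw [Real.dist_eq, sub_zero, abs_of_pos (hpos j)] at this
      exact absurd hj.1 (by simp; linarith)
  obtain ⟨C, hC⟩ := hbdd
  have hmeas : Measurable Δν := by
    have : Δν = fun x : ℝ => (({j : ℕ | x / 2 < p j ∧ p j ≤ x}).ncard : ℝ) := funext hΔν
    rw [this]; exact dnu_measurable p hfin
  have hΔνnn : ∀ x, 0 ≤ Δν x := by intro x; rw [hΔν]; positivity
  -- integrability
  have hint : ∀ a b : ℝ, 0 ≤ a → IntegrableOn Δν (Set.Ioc a b) := by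
    intro a b ha
    apply Measure.integrableOn_of_bounded (M := max C 0) measure_Ioc_lt_top.ne
      hmeas.aestronglyMeasurable
    filter_upwards [ae_restrict_mem measurableSet_Ioc] with x hx
    have hx0 : 0 < x := lt_of_le_of_lt ha hx.1
    rw [Real.norm_eq_abs, abs_of_nonneg (hΔνnn x)]
    exact le_max_of_le_left (hC x hx0)
  -- D differences as integrals
  have hDdiff : ∀ a b : ℝ, 0 ≤ a → a ≤ b → D b - D a = ∫ u in Set.Ioc a b, Δν u := by
    intro a b ha hab
    rw [hD, hD, ← Set.Ioc_union_Ioc_eq_Ioc ha hab,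
      setIntegral_union (Set.Ioc_disjoint_Ioc_of_le le_rfl) measurableSet_Ioc (hint 0 a le_rfl)
        (hint a b ha)]
    ring
  -- epsilonics
  rw [Metric.tendsto_atTop]
  intro ε hε
  set ε' : ℝ := min (ε / 3) (1 / 8) with hε'def
  have hε'pos : 0 < ε' := lt_min (by linarith) (by norm_num)
  have hε'le : ε' ≤ ε / 3 := min_le_left _ _
  have hε'le8 : ε' ≤ 1 / 8 := min_le_right _ _
  obtain ⟨δ, hδpos, hδ⟩ := (Metric.tendsto_nhdsWithin_nhds.1 hDk) ε' hε'pos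
  have hDest : ∀ x : ℝ, 0 < x → x < δ → |D x - k * x| ≤ ε' * x := by
    intro x hx hxδ
    have h1 := hδ (Set.mem_Ioi.2 hx) (by rwa [Real.dist_eq, sub_zero, abs_of_pos hx])
    rw [Real.dist_eq] at h1
    have hxne : x ≠ 0 := ne_of_gt hx
    have : D x - (k : ℝ) * x = (D x / x - k) * x := by field_simp
    rw [this, abs_mul, abs_of_pos hx]
    exact mul_le_mul_of_nonneg_right (le_of_lt h1) (le_of_lt hx)
  obtain ⟨N, hN⟩ := (Metric.tendsto_atTop.1 hp0 (δ / 2) (by positivity))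
  refine ⟨N, fun j hj => ?_⟩
  have hpjδ : p j < δ / 2 := by
    have := hN j hj
    rwa [Real.dist_eq, sub_zero, abs_of_pos (hpos j)] at this
  have hbj : 0 < p j := hpos j
  have hajk : 0 < p (j + k) := hpos (j + k)
  have hjk_le : p (j + k) ≤ p j := hanti (Nat.le_add_right j k)
  set a : ℝ := 2 * p (j + k) with hadef
  set b : ℝ := p j with hbdef
  have ha0 : 0 < a := by positivity
  have haδ : a < δ := by
    have : a ≤ 2 * p j := by simp [hadef]; linarith
    linarith
  have hbδ : b < δ := by simp only [hbdef]; linarith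
  -- Claim A : (1 - 2ε') * b ≤ a
  have claimA : (1 - 2 * ε') * b ≤ a := by
    rcases le_or_gt b a with hab | hab
    · nlinarith
    · -- a < b : upper count bound gives integral bound
      have hIone : ∫ u in Set.Ioc a b, Δν u ≤ ((k : ℝ) - 1) * (b - a) := by
        rw [integral_Ioc_eq_integral_Ioo]
        have hmono_int : ∫ u in Set.Ioo a b, Δν u ≤ ∫ _ in Set.Ioo a b, ((k : ℝ) - 1) := by
          apply setIntegral_mono_on
            ((hint a b ha0.le).mono_set Set.Ioo_subset_Ioc_self)
            (integrableOn_const measure_Ioo_lt_top.ne) measurableSet_Ioo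
          intro x hx
          rw [hΔν]
          have hsub : {i : ℕ | x / 2 < p i ∧ p i ≤ x} ⊆ Set.Ioo j (j + k) := by
            rintro i ⟨h1, h2⟩
            constructor
            · by_contra h
              push_neg at h
              have : p j ≤ p i := hanti h
              have : x < p j := hx.2
              linarith
            · by_contra h
              push_neg at h
              have : p i ≤ p (j + k) := hanti h
              have := hx.1
              simp only [hadef] at this
              linarith
          have hcard : {i : ℕ | x / 2 < p i ∧ p i ≤ x}.ncard ≤ (Set.Ioo j (j + k)).ncard :=
            Set.ncard_le_ncard hsub (by rw [← Finset.coe_Ioo]; exact (Finset.Ioo j (j + k)).finite_toSet)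
          have hIoo : (Set.Ioo j (j + k)).ncard = k - 1 := by
            rw [← Finset.coe_Ioo, Set.ncard_coe_finset, Nat.card_Ioo]
            omega
          rw [hIoo] at hcard
          calc (({i : ℕ | x / 2 < p i ∧ p i ≤ x}).ncard : ℝ) ≤ ((k - 1 : ℕ) : ℝ) :=
                Nat.cast_le.2 hcard
            _ = (k : ℝ) - 1 := by rw [Nat.cast_sub hk]; norm_num
        rw [setIntegral_const, Real.volume_real_Ioo_of_le hab.le, smul_eq_mul] at hmono_int
        linarith [hmono_int]
      have hDb := hDest b hbj hbδ
      have hDa := hDest a ha0 haδ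
      rw [← hDdiff a b ha0.le hab.le] at hIone
      rw [abs_le] at hDb hDa
      nlinarith [hDb.1, hDa.2]
  -- Claim B : (1 - 2ε') * a ≤ b
  have claimB : (1 - 2 * ε') * a ≤ b := by
    rcases le_or_gt a b with hab | hab
    · nlinarith
    · -- b < a : lower count bound
      have hIone : ((k : ℝ) + 1) * (a - b) ≤ ∫ u in Set.Ioc b a, Δν u := by
        rw [integral_Ioc_eq_integral_Ioo]
        have hmono_int : ∫ _ in Set.Ioo b a, ((k : ℝ) + 1) ≤ ∫ u in Set.Ioo b a, Δν u := by
          apply setIntegral_mono_on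
            (integrableOn_const measure_Ioo_lt_top.ne)
            ((hint b a hbj.le).mono_set Set.Ioo_subset_Ioc_self) measurableSet_Ioo
          intro x hx
          rw [hΔν]
          have hsub : Set.Icc j (j + k) ⊆ {i : ℕ | x / 2 < p i ∧ p i ≤ x} := by
            rintro i ⟨h1, h2⟩
            constructor
            · have : p (j + k) ≤ p i := hanti h2
              have := hx.2
              simp only [hadef] at this
              linarith
            · have : p i ≤ p j := hanti h1
              have := hx.1
              simp only [hbdef] at this
              linarith
          have hcard : (Set.Icc j (j + k)).ncard ≤ {i : ℕ | x / 2 < p i ∧ p i ≤ x}.ncard :=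
            Set.ncard_le_ncard hsub (hfin x)
          have hIcc : (Set.Icc j (j + k)).ncard = k + 1 := by
            rw [← Finset.coe_Icc, Set.ncard_coe_finset, Nat.card_Icc]
            omega
          rw [hIcc] at hcard
          calc ((k : ℝ) + 1) = ((k + 1 : ℕ) : ℝ) := by push_cast; ring
            _ ≤ (({i : ℕ | x / 2 < p i ∧ p i ≤ x}).ncard : ℝ) := Nat.cast_le.2 hcard
        rw [setIntegral_const, Real.volume_real_Ioo_of_le hab.le, smul_eq_mul] at hmono_int
        linarith [hmono_int]
      have hDb := hDest b hbj hbδ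
      have hDa := hDest a ha0 haδ
      rw [← hDdiff b a hbj.le hab.le] at hIone
      rw [abs_le] at hDb hDa
      nlinarith [hDb.2, hDa.1]
  -- conclude
  rw [Real.dist_eq, abs_lt]
  have h1 : (1 - 2 * ε') * p j ≤ 2 * p (j + k) := claimA
  have h2 : (1 - 2 * ε') * (2 * p (j + k)) ≤ p j := claimB
  constructor
  · have h3 : (1 / 2 - ε) < p (j + k) / p j := by
      rw [lt_div_iff₀ hbj]
      nlinarith [h1, mul_le_mul_of_nonneg_right hε'le hbj.le, mul_pos hε hbj]
    linarith
  · have h4 : p (j + k) / p j < 1 / 2 + ε := by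
      rw [div_lt_iff₀ hbj]
      nlinarith [h2, mul_le_mul_of_nonneg_left hjk_le hε'pos.le,
        mul_le_mul_of_nonneg_right hε'le hbj.le, mul_pos hε hbj]
    linarith
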